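/- In the Lamplighter group ℤ₂ ≀ ℤ, viewing finitely supported functions ℤ → ℤ₂ as finite subsets of ℤ, two elements (1, F) and (1, G) (with shift component 1) are conjugate whenever |F| ≡ |G| (mod 2). -/

import Mathlib

/-- The Lamplighter group `ℤ₂ ≀ ℤ = ℤ ⋉ ℤ₂^(ℤ)`: a finitely supported function
`ℤ → ℤ₂` is identified with its support, a finite subset of `ℤ`; elements are pairs
`(b, F)` with `b ∈ ℤ` a shift and `F ⊆ ℤ` finite, multiplied by
`(b,F)(c,G) = (b+c, (F+c) △ G)`. -/
structure Lamplighter where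
  s : ℤ
  F : Finset ℤ

namespace Lamplighter

theorem ext' {x y : Lamplighter} (h1 : x.s = y.s) (h2 : x.F = y.F) : x = y := by
  cases x; cases y; cases h1; cases h2; rfl

instance : One Lamplighter := ⟨⟨0, ∅⟩⟩
instance : Mul Lamplighter := ⟨fun x y => ⟨x.s + y.s, symmDiff (x.F.image (· + y.s)) y.F⟩⟩
instance : Inv Lamplighter := ⟨fun x => ⟨-x.s, x.F.image (· + -x.s)⟩⟩

@[simp] lemma mul_s (x y : Lamplighter) : (x * y).s = x.s + y.s := rfl
@[simp] lemma mul_F (x y : Lamplighter) :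
    (x * y).F = symmDiff (x.F.image (· + y.s)) y.F := rfl
@[simp] lemma one_s : (1 : Lamplighter).s = 0 := rfl
@[simp] lemma one_F : (1 : Lamplighter).F = ∅ := rfl
@[simp] lemma inv_s (x : Lamplighter) : (x⁻¹).s = -x.s := rfl
@[simp] lemma inv_F (x : Lamplighter) : (x⁻¹).F = x.F.image (· + -x.s) := rfl

instance : Group Lamplighter where
  mul_assoc x y z := by
    apply ext'
    · simp [add_assoc]
    · show symmDiff ((symmDiff (x.F.image (· + y.s)) y.F).image (· + z.s)) z.F
        = symmDiff (x.F.image (· + (y.s + z.s))) (symmDiff (y.F.image (· + z.s)) z.F)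
      rw [Finset.image_symmDiff _ _ (add_left_injective _), Finset.image_image,
        symmDiff_assoc]
      have hc : ((· + z.s) ∘ (· + y.s)) = (fun w : ℤ => w + (y.s + z.s)) := by
        funext w; simp [add_assoc]
      rw [hc]
  one_mul x := by
    apply ext'
    · simp
    · show symmDiff ((∅ : Finset ℤ).image (· + x.s)) x.F = x.F
      simp
  mul_one x := by
    apply ext'
    · simp
    · show symmDiff (x.F.image (· + (0 : ℤ))) ∅ = x.F
      simp [Finset.image_id']
  inv_mul_cancel x := by
    apply ext'
    · simp
    · show symmDiff ((x.F.image (· + -x.s)).image (· + x.s)) x.F = ∅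
      rw [Finset.image_image]
      have hc : ((· + x.s) ∘ (· + -x.s)) = (id : ℤ → ℤ) := by funext w; simp
      rw [hc, Finset.image_id, symmDiff_self, Finset.bot_eq_empty]

end Lamplighter


private lemma lamp_count_step (S : Finset ℤ) (x : ℤ) :
    (S.filter (· ≤ x)).card = (S.filter (· ≤ x - 1)).card + (if x ∈ S then 1 else 0) := by
  have hsplit : S.filter (· ≤ x) = S.filter (· ≤ x - 1) ∪ S.filter (· = x) := by
    rw [← Finset.filter_or]
    apply Finset.filter_congr
    intro y _; constructor <;> intro hy <;> omega
  have hd : Disjoint (S.filter (· ≤ x - 1)) (S.filter (· = x)) := by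
    rw [Finset.disjoint_filter]
    intro y _ hy hy'; omega
  rw [hsplit, Finset.card_union_of_disjoint hd, Finset.filter_eq']
  by_cases hx : x ∈ S <;> simp [hx]

/-- For an even finite set `S`, the "parity accumulator" set `H` satisfies
`(H+1) △ H = S`. -/
private lemma lamp_solve (S : Finset ℤ) (hSne : S.Nonempty) (hSeven : S.card % 2 = 0) :
    ∃ H : Finset ℤ, symmDiff (H.image (· + 1)) H = S := by
  set m := S.min' hSne with hm
  set M := S.max' hSne with hM
  refine ⟨(Finset.Icc m M).filter (fun x => (S.filter (· ≤ x)).card % 2 = 1), ?_⟩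
  set H := (Finset.Icc m M).filter (fun x => (S.filter (· ≤ x)).card % 2 = 1) with hH
  have hmem : ∀ x : ℤ, x ∈ H ↔ (S.filter (· ≤ x)).card % 2 = 1 := by
    intro x
    rw [hH, Finset.mem_filter, Finset.mem_Icc]
    constructor
    · rintro ⟨_, hp⟩; exact hp
    · intro hp
      refine ⟨⟨?_, ?_⟩, hp⟩
      · have hne : (S.filter (· ≤ x)).Nonempty := by
          rw [← Finset.card_pos]; omega
        obtain ⟨y, hy⟩ := hne
        rw [Finset.mem_filter] at hy
        exact le_trans (S.min'_le y hy.1) hy.2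
      · by_contra hc
        push_neg at hc
        have : S.filter (· ≤ x) = S := by
          apply Finset.filter_true_of_mem
          intro y hy
          exact le_trans (S.le_max' y hy) (le_of_lt hc)
        rw [this] at hp; omega
  apply Finset.ext
  intro x
  rw [Finset.mem_symmDiff]
  have h1 : x ∈ H.image (· + 1) ↔ x - 1 ∈ H := by
    simp only [Finset.mem_image]
    constructor
    · rintro ⟨y, hy, rfl⟩; simpa using hy
    · intro hy; exact ⟨x - 1, hy, by ring⟩
  rw [h1, hmem, hmem]
  have hstep := lamp_count_step S x
  by_cases hx : x ∈ S <;> simp only [hx, if_true, if_false] at hstep <;>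
    simp [hx] at hstep ⊢ <;> omega

/-- In the Lamplighter group `ℤ₂ ≀ ℤ`, two elements `(1, F)` and `(1, G)` (with shift
component `1`) are conjugate whenever `|F| ≡ |G| (mod 2)`. -/
theorem lamplighter_shift_one_conj (F G : Finset ℤ) (h : F.card % 2 = G.card % 2) :
    IsConj (⟨1, F⟩ : Lamplighter) ⟨1, G⟩ := by
  by_cases hFG : F = G
  · subst hFG; exact IsConj.refl _
  set S : Finset ℤ := symmDiff F G with hS
  have hSne : S.Nonempty := by
    rw [Finset.nonempty_iff_ne_empty, hS]
    intro hc
    exact hFG (by simpa [← Finset.bot_eq_empty, symmDiff_eq_bot] using hc)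
  have hSeven : S.card % 2 = 0 := by
    have h1 := Finset.card_sdiff_add_card_inter F G
    have h2 := Finset.card_sdiff_add_card_inter G F
    have hcc : (G ∩ F).card = (F ∩ G).card := by rw [Finset.inter_comm]
    have hd : Disjoint (F \ G) (G \ F) := disjoint_sdiff_sdiff
    rw [hS, symmDiff_def, Finset.sup_eq_union, Finset.card_union_of_disjoint hd]
    omega
  obtain ⟨H, hKey⟩ := lamp_solve S hSne hSeven
  rw [isConj_iff]
  refine ⟨⟨0, H⟩, ?_⟩
  rw [mul_inv_eq_iff_eq_mul]
  show (⟨0, H⟩ : Lamplighter) * ⟨1, F⟩ = ⟨1, G⟩ * ⟨0, H⟩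
  apply Lamplighter.ext'
  · simp
  · show symmDiff (H.image (· + 1)) F = symmDiff (G.image (· + 0)) H
    have himg : G.image (· + (0:ℤ)) = G := by simp [Finset.image_id']
    rw [himg]
    have : symmDiff (H.image (· + 1)) F = symmDiff (symmDiff (H.image (· + 1)) H) (symmDiff H F) := by
      rw [← symmDiff_assoc, symmDiff_symmDiff_cancel_right]
    rw [this, hKey, hS]
    rw [symmDiff_comm H F, ← symmDiff_assoc, symmDiff_comm F G,
      symmDiff_symmDiff_cancel_right]
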